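/- arXiv:1210.0931 — 3 statements merged into one kernel-verified Lean document; each statement's English description precedes it below -/
import Mathlib

section
/- Conversely, every function w holomorphic on the unit disk 𝔻, continuous on its closure, satisfying Re(conj(ζ^κ) w(ζ)) = 0 for all ζ ∈ ∂𝔻 (κ ∈ ℤ, κ ≥ 0), is of the form w(z) = z^κ (i d₀ + Σ_{l=1}^κ (d_l z^l − conj(d_l) z^{−l})) for some d₀ ∈ ℝ and d₁,…,d_κ ∈ ℂ. In particular, the real vector space of such solutions has dimension 2κ+1. -/
open Complex Metric Real Finset Polynomial

private lemma conj_intervalIntegral' (f : ℝ → ℂ) (a b : ℝ) :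
    (starRingEnd ℂ) (∫ x in a..b, f x) = ∫ x in a..b, (starRingEnd ℂ) (f x) := by
  simp [intervalIntegral, ← integral_conj]

/-- every w holomorphic on 𝔻, continuous on the closed disk, with
Re(conj(ζ^κ) w(ζ)) = 0 on ∂𝔻 (κ ≥ 0), has the form
w(z) = i d₀ z^κ + Σ_{l=1}^κ (d_l z^{κ+l} − conj(d_l) z^{κ−l}), with coefficients
(d₀, d₁,…,d_κ) ∈ ℝ × ℂ^κ unique; so the solution space has real dimension 2κ+1. -/
theorem stmt7 (κ : ℕ) (w : ℂ → ℂ)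
    (hol : DifferentiableOn ℂ w (Metric.ball 0 1))
    (cont : ContinuousOn w (Metric.closedBall 0 1))
    (hb : ∀ ζ : ℂ, ‖ζ‖ = 1 → ((starRingEnd ℂ) (ζ ^ κ) * w ζ).re = 0) :
    ∃! p : ℝ × (Fin κ → ℂ),
      ∀ z ∈ Metric.closedBall (0 : ℂ) 1,
        w z = Complex.I * (p.1 : ℂ) * z ^ κ +
          ∑ l : Fin κ, (p.2 l * z ^ (κ + ((l : ℕ) + 1))
            - (starRingEnd ℂ) (p.2 l) * z ^ (κ - ((l : ℕ) + 1))) := by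
  set e : ℝ → ℂ := circleMap 0 1 with he
  have hnorm : ∀ θ, ‖e θ‖ = 1 := by
    intro θ
    simp [he, circleMap, Complex.norm_exp_ofReal_mul_I]
  have hene : ∀ θ, e θ ≠ 0 := by
    intro θ h
    have := hnorm θ
    rw [h] at this; simp at this
  have hemem : ∀ θ, e θ ∈ closedBall (0 : ℂ) 1 := by
    intro θ
    simp [mem_closedBall, dist_eq_norm, hnorm θ]
  have hwe : Continuous fun θ => w (e θ) :=
    cont.comp_continuous (continuous_circleMap 0 1) hemem
  have hconjinv : ∀ θ : ℝ, (starRingEnd ℂ) (e θ) = (e θ)⁻¹ :=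
    fun θ => (Complex.inv_eq_conj (hnorm θ)).symm
  set N : ℕ → ℂ := fun n => ∫ θ in (0:ℝ)..(2*π), ((e θ)⁻¹) ^ n * w (e θ) with hNdef
  set P : ℕ → ℂ := fun n => ∫ θ in (0:ℝ)..(2*π), (e θ) ^ n * w (e θ) with hPdef
  -- Cauchy's theorem: the "negative" coefficients vanish
  have hPzero : ∀ m : ℕ, P (m + 1) = 0 := by
    intro m
    have h0 : (∮ z in C((0:ℂ), 1), z ^ m * w z) = 0 := by
      apply Complex.circleIntegral_eq_zero_of_differentiable_on_off_countable zero_le_one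
        Set.countable_empty ((continuousOn_pow m).mul cont)
      intro z hz
      exact (differentiableAt_pow m).mul (hol.differentiableAt (isOpen_ball.mem_nhds hz.1))
    have h1 : (∮ z in C((0:ℂ), 1), z ^ m * w z) = Complex.I * P (m + 1) := by
      rw [circleIntegral, hPdef, ← intervalIntegral.integral_const_mul]
      refine intervalIntegral.integral_congr fun θ _ => ?_
      simp only [he, deriv_circleMap, smul_eq_mul, sub_zero]
      ring
    rw [h1] at h0
    have := mul_eq_zero.mp h0
    simpa [Complex.I_ne_zero] using this
  -- boundary relation
  have hbd : ∀ θ : ℝ, w (e θ) = -((e θ) ^ (2 * κ) * (starRingEnd ℂ) (w (e θ))) := by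
    intro θ
    have h1 := hb (e θ) (hnorm θ)
    have h2 : (starRingEnd ℂ) ((starRingEnd ℂ) ((e θ) ^ κ) * w (e θ)) =
        -((starRingEnd ℂ) ((e θ) ^ κ) * w (e θ)) := by
      generalize hA : (starRingEnd ℂ) ((e θ) ^ κ) * w (e θ) = A at h1 ⊢
      apply Complex.ext <;> simp [h1]
    rw [map_mul, Complex.conj_conj] at h2
    have h3 : (e θ) ^ κ * ((e θ) ^ κ * (starRingEnd ℂ) (w (e θ)))
        = (e θ) ^ κ * (-((starRingEnd ℂ) ((e θ) ^ κ) * w (e θ))) := by rw [h2]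
    have h4 : (e θ) ^ κ * (starRingEnd ℂ) ((e θ) ^ κ) = 1 := by
      rw [Complex.mul_conj]
      have h5 : Complex.normSq ((e θ) ^ κ) = 1 := by
        rw [show ((e θ) ^ κ) = ((e θ) ^ κ) from rfl]
        rw [map_pow]
        have : Complex.normSq (e θ) = 1 := by
          rw [Complex.normSq_eq_norm_sq, hnorm θ]; norm_num
        rw [this, one_pow]
      rw [h5]; norm_num
    have h5 : (e θ) ^ (2 * κ) * (starRingEnd ℂ) (w (e θ)) = -w (e θ) := by
      calc (e θ) ^ (2 * κ) * (starRingEnd ℂ) (w (e θ))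
          = (e θ) ^ κ * ((e θ) ^ κ * (starRingEnd ℂ) (w (e θ))) := by
            rw [two_mul, pow_add]; ring
        _ = (e θ) ^ κ * (-((starRingEnd ℂ) ((e θ) ^ κ) * w (e θ))) := by rw [h2]
        _ = -((e θ) ^ κ * (starRingEnd ℂ) ((e θ) ^ κ) * w (e θ)) := by ring
        _ = -w (e θ) := by rw [h4]; ring
    rw [h5, neg_neg]
  -- integral relations from the boundary condition
  have hNN : ∀ n : ℕ, n ≤ 2 * κ → N n = -(starRingEnd ℂ) (N (2 * κ - n)) := by
    intro n hn
    have hpt : ∀ θ : ℝ, ((e θ)⁻¹) ^ n * w (e θ)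
        = (starRingEnd ℂ) (-(((e θ)⁻¹) ^ (2 * κ - n) * w (e θ))) := by
      intro θ
      have hsplit : (e θ) ^ (2 * κ) = (e θ) ^ n * (e θ) ^ (2 * κ - n) := by
        rw [← pow_add]; congr 1; omega
      have hone : ((e θ)⁻¹) ^ n * (e θ) ^ n = 1 := by
        rw [inv_pow, inv_mul_cancel₀ (pow_ne_zero n (hene θ))]
      rw [map_neg, map_mul, map_pow, map_inv₀, hconjinv θ, inv_inv]
      conv_lhs => rw [hbd θ]
      rw [hsplit]
      calc ((e θ)⁻¹) ^ n * -((e θ) ^ n * (e θ) ^ (2 * κ - n) * (starRingEnd ℂ) (w (e θ)))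
          = -((((e θ)⁻¹) ^ n * (e θ) ^ n)
              * ((e θ) ^ (2 * κ - n) * (starRingEnd ℂ) (w (e θ)))) := by ring
        _ = -((e θ) ^ (2 * κ - n) * (starRingEnd ℂ) (w (e θ))) := by rw [hone]; ring
    calc N n = ∫ θ in (0:ℝ)..(2*π), (starRingEnd ℂ) (-(((e θ)⁻¹) ^ (2 * κ - n) * w (e θ))) := by
          rw [hNdef]
          exact intervalIntegral.integral_congr fun θ _ => hpt θ
      _ = (starRingEnd ℂ) (∫ θ in (0:ℝ)..(2*π), -(((e θ)⁻¹) ^ (2 * κ - n) * w (e θ))) := by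
          rw [conj_intervalIntegral']
      _ = -(starRingEnd ℂ) (N (2 * κ - n)) := by
          rw [intervalIntegral.integral_neg, map_neg, hNdef]
  have hNPzero : ∀ n : ℕ, 2 * κ < n → N n = 0 := by
    intro n hn
    have hpt : ∀ θ : ℝ, ((e θ)⁻¹) ^ n * w (e θ)
        = (starRingEnd ℂ) (-((e θ) ^ (n - 2 * κ) * w (e θ))) := by
      intro θ
      have hsplit : ((e θ)⁻¹) ^ n = ((e θ)⁻¹) ^ (2 * κ) * ((e θ)⁻¹) ^ (n - 2 * κ) := by
        rw [← pow_add]; congr 1; omega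
      have hone : ((e θ)⁻¹) ^ (2 * κ) * (e θ) ^ (2 * κ) = 1 := by
        rw [inv_pow, inv_mul_cancel₀ (pow_ne_zero _ (hene θ))]
      rw [map_neg, map_mul, map_pow, hconjinv θ]
      conv_lhs => rw [hbd θ]
      rw [hsplit]
      calc ((e θ)⁻¹) ^ (2 * κ) * ((e θ)⁻¹) ^ (n - 2 * κ)
            * -((e θ) ^ (2 * κ) * (starRingEnd ℂ) (w (e θ)))
          = -((((e θ)⁻¹) ^ (2 * κ) * (e θ) ^ (2 * κ))
              * (((e θ)⁻¹) ^ (n - 2 * κ) * (starRingEnd ℂ) (w (e θ)))) := by ring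
        _ = -(((e θ)⁻¹) ^ (n - 2 * κ) * (starRingEnd ℂ) (w (e θ))) := by rw [hone]; ring
    have h2 : N n = -(starRingEnd ℂ) (P (n - 2 * κ)) := by
      calc N n = ∫ θ in (0:ℝ)..(2*π), (starRingEnd ℂ) (-((e θ) ^ (n - 2 * κ) * w (e θ))) := by
            rw [hNdef]
            exact intervalIntegral.integral_congr fun θ _ => hpt θ
        _ = (starRingEnd ℂ) (∫ θ in (0:ℝ)..(2*π), -((e θ) ^ (n - 2 * κ) * w (e θ))) := by
            rw [conj_intervalIntegral']
        _ = -(starRingEnd ℂ) (P (n - 2 * κ)) := by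
            rw [intervalIntegral.integral_neg, map_neg, hPdef]
    rw [h2]
    have h3 : n - 2 * κ = (n - 2 * κ - 1) + 1 := by omega
    rw [h3, hPzero, map_zero, neg_zero]
  -- coefficients
  set cn : ℕ → ℂ := fun n => (2 * (π:ℂ))⁻¹ * N n with hcndef
  have hcn_zero : ∀ n : ℕ, 2 * κ < n → cn n = 0 := by
    intro n hn
    simp only [hcndef]
    rw [hNPzero n hn, mul_zero]
  have hcn_rel : ∀ n : ℕ, n ≤ 2 * κ → cn n = -(starRingEnd ℂ) (cn (2 * κ - n)) := by
    intro n hn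
    simp only [hcndef]
    rw [hNN n hn, map_mul, map_inv₀, map_mul, Complex.conj_ofReal, map_ofNat]
    ring
  -- power series representation
  have hps : HasFPowerSeriesOnBall w (cauchyPowerSeries w 0 1) 0 1 := by
    apply Complex.hasFPowerSeriesOnBall_of_differentiable_off_countable (s := ∅)
      Set.countable_empty (by simpa using cont)
      (fun z hz => hol.differentiableAt (isOpen_ball.mem_nhds (by simpa using hz.1))) one_pos
  have hterm : ∀ (n : ℕ) (z : ℂ), (cauchyPowerSeries w 0 1 n fun _ => z) = cn n * z ^ n := by
    intro n z
    rw [cauchyPowerSeries_apply]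
    have hint : (∮ ζ in C((0:ℂ), 1), (z / (ζ - 0)) ^ n • ((ζ - 0)⁻¹ • w ζ))
        = Complex.I * z ^ n * N n := by
      rw [circleIntegral, hNdef, ← intervalIntegral.integral_const_mul]
      refine intervalIntegral.integral_congr fun θ _ => ?_
      simp only [he, deriv_circleMap, smul_eq_mul, sub_zero]
      rw [← he]
      field_simp [hene θ]
      ring
    rw [hint]
    simp only [hcndef]
    simp only [smul_eq_mul]
    have hπ : (π:ℂ) ≠ 0 := by exact_mod_cast Real.pi_ne_zero
    field_simp [Complex.I_ne_zero]
  have hrep : ∀ z ∈ ball (0:ℂ) 1, w z = ∑ n ∈ Finset.range (2 * κ + 1), cn n * z ^ n := by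
    intro z hz
    have hz' : z ∈ Metric.eball (0:ℂ) ((1:NNReal):ENNReal) := by
      rw [Metric.eball_coe]
      simpa using hz
    have hs := hps.hasSum (y := z) (by simpa [Metric.mem_eball, edist_zero_right] using hz')
    rw [zero_add] at hs
    have hs' : HasSum (fun n => cn n * z ^ n) (w z) := by
      have : (fun n => cauchyPowerSeries w 0 1 n fun _ => z) = fun n => cn n * z ^ n := by
        funext n; exact hterm n z
      rwa [this] at hs
    rw [← hs'.tsum_eq]
    exact tsum_eq_sum fun n hn => by
      rw [hcn_zero n (by simp only [Finset.mem_range] at hn; omega), zero_mul]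
  -- symmetry facts about the coefficients
  have hconj : ∀ l : ℕ, l < κ →
      (starRingEnd ℂ) (cn (κ + l + 1)) = -cn (κ - 1 - l) := by
    intro l hl
    have h := hcn_rel (κ - 1 - l) (by omega)
    rw [show 2 * κ - (κ - 1 - l) = κ + l + 1 from by omega] at h
    rw [h, neg_neg]
  have hIm : Complex.I * ((cn κ).im : ℂ) = cn κ := by
    have h := hcn_rel κ (by omega)
    rw [show 2 * κ - κ = κ from by omega] at h
    have hre : (cn κ).re = 0 := by
      have h2 := congrArg Complex.re h
      simp at h2
      linarith
    apply Complex.ext <;> simp [hre]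
  -- the polynomial identity
  have hpoly : ∀ z : ℂ, (∑ n ∈ Finset.range (2 * κ + 1), cn n * z ^ n) =
      Complex.I * ((cn κ).im : ℂ) * z ^ κ +
        ∑ l : Fin κ, (cn (κ + (l : ℕ) + 1) * z ^ (κ + ((l : ℕ) + 1))
          - (starRingEnd ℂ) (cn (κ + (l : ℕ) + 1)) * z ^ (κ - ((l : ℕ) + 1))) := by
    intro z
    rw [hIm]
    rw [Fin.sum_univ_eq_sum_range
      (fun l => cn (κ + l + 1) * z ^ (κ + (l + 1))
        - (starRingEnd ℂ) (cn (κ + l + 1)) * z ^ (κ - (l + 1))) κ]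
    have hR : ∀ l ∈ Finset.range κ,
        cn (κ + l + 1) * z ^ (κ + (l + 1))
          - (starRingEnd ℂ) (cn (κ + l + 1)) * z ^ (κ - (l + 1))
        = cn (κ + l + 1) * z ^ (κ + l + 1) + cn (κ - 1 - l) * z ^ (κ - 1 - l) := by
      intro l hl
      rw [hconj l (Finset.mem_range.mp hl)]
      rw [show κ + (l + 1) = κ + l + 1 from by omega,
        show κ - (l + 1) = κ - 1 - l from by omega]
      ring
    rw [Finset.sum_congr rfl hR, Finset.sum_add_distrib]
    rw [show 2 * κ + 1 = κ + (κ + 1) from by omega, Finset.sum_range_add,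
      Finset.sum_range_succ']
    rw [← Finset.sum_range_reflect (fun i => cn i * z ^ i) κ]
    have hmid : ∀ i ∈ Finset.range κ,
        cn (κ + (i + 1)) * z ^ (κ + (i + 1)) = cn (κ + i + 1) * z ^ (κ + i + 1) := by
      intro i _
      rw [show κ + (i + 1) = κ + i + 1 from by omega]
    rw [Finset.sum_congr rfl hmid]
    simp only [add_zero]
    ring
  have hform : ∀ z ∈ closedBall (0:ℂ) 1,
      w z = Complex.I * ((cn κ).im : ℂ) * z ^ κ +
        ∑ l : Fin κ, (cn (κ + (l : ℕ) + 1) * z ^ (κ + ((l : ℕ) + 1))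
          - (starRingEnd ℂ) (cn (κ + (l : ℕ) + 1)) * z ^ (κ - ((l : ℕ) + 1))) := by
    have hg : Continuous fun z : ℂ => Complex.I * ((cn κ).im : ℂ) * z ^ κ +
        ∑ l : Fin κ, (cn (κ + (l : ℕ) + 1) * z ^ (κ + ((l : ℕ) + 1))
          - (starRingEnd ℂ) (cn (κ + (l : ℕ) + 1)) * z ^ (κ - ((l : ℕ) + 1))) := by
      refine (continuous_const.mul (continuous_pow κ)).add
        (continuous_finset_sum _ fun l _ => ?_)
      exact (continuous_const.mul (continuous_pow _)).sub
        (continuous_const.mul (continuous_pow _))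
    intro z hz
    refine Set.EqOn.of_subset_closure (s := ball (0:ℂ) 1) (t := closedBall (0:ℂ) 1)
      (fun x hx => ?_) cont hg.continuousOn ball_subset_closedBall
      (by rw [closure_ball (0:ℂ) one_ne_zero]) hz
    rw [hrep x hx, hpoly x]
  refine ⟨((cn κ).im, fun l => cn (κ + (l : ℕ) + 1)), hform, ?_⟩
  intro q hq
  have heq : ∀ z ∈ closedBall (0:ℂ) 1,
      Complex.I * (q.1 : ℂ) * z ^ κ +
        ∑ l : Fin κ, (q.2 l * z ^ (κ + ((l : ℕ) + 1))
          - (starRingEnd ℂ) (q.2 l) * z ^ (κ - ((l : ℕ) + 1)))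
      = Complex.I * ((cn κ).im : ℂ) * z ^ κ +
        ∑ l : Fin κ, (cn (κ + (l : ℕ) + 1) * z ^ (κ + ((l : ℕ) + 1))
          - (starRingEnd ℂ) (cn (κ + (l : ℕ) + 1)) * z ^ (κ - ((l : ℕ) + 1))) :=
    fun z hz => (hq z hz).symm.trans (hform z hz)
  have hQ0 : (Polynomial.C (Complex.I * ((q.1 : ℂ) - ((cn κ).im : ℂ))) * Polynomial.X ^ κ +
      ∑ l : Fin κ, (Polynomial.C (q.2 l - cn (κ + (l : ℕ) + 1))
          * Polynomial.X ^ (κ + ((l : ℕ) + 1))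
        - Polynomial.C ((starRingEnd ℂ) (q.2 l) - (starRingEnd ℂ) (cn (κ + (l : ℕ) + 1)))
          * Polynomial.X ^ (κ - ((l : ℕ) + 1)))) = 0 := by
    apply Polynomial.eq_zero_of_infinite_isRoot
    have hinf : (closedBall (0:ℂ) 1).Infinite := by
      refine Set.infinite_of_injective_forall_mem (f := fun n : ℕ => ((n + 2 : ℕ) : ℂ)⁻¹) ?_ ?_
      · intro a b hab
        simp only [inv_inj, Nat.cast_inj] at hab
        omega
      · intro a
        simp only [mem_closedBall, dist_zero_right, norm_inv, Complex.norm_natCast]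
        rw [inv_le_one₀ (by positivity)]
        exact_mod_cast by omega
    refine hinf.mono fun z hz => ?_
    have h := heq z hz
    simp only [Set.mem_setOf_eq, Polynomial.IsRoot, Polynomial.eval_add, Polynomial.eval_mul,
      Polynomial.eval_pow, Polynomial.eval_C, Polynomial.eval_X, Polynomial.eval_finset_sum,
      Polynomial.eval_sub]
    have hsplit : ∀ l ∈ (Finset.univ : Finset (Fin κ)),
        (q.2 l - cn (κ + (l : ℕ) + 1)) * z ^ (κ + ((l : ℕ) + 1))
          - ((starRingEnd ℂ) (q.2 l) - (starRingEnd ℂ) (cn (κ + (l : ℕ) + 1)))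
            * z ^ (κ - ((l : ℕ) + 1))
        = (q.2 l * z ^ (κ + ((l : ℕ) + 1))
            - (starRingEnd ℂ) (q.2 l) * z ^ (κ - ((l : ℕ) + 1)))
          - (cn (κ + (l : ℕ) + 1) * z ^ (κ + ((l : ℕ) + 1))
            - (starRingEnd ℂ) (cn (κ + (l : ℕ) + 1)) * z ^ (κ - ((l : ℕ) + 1))) :=
      fun l _ => by ring
    rw [Finset.sum_congr rfl hsplit, Finset.sum_sub_distrib]
    linear_combination h
  have hcoeff : ∀ n : ℕ, Polynomial.coeff (Polynomial.C (Complex.I * ((q.1 : ℂ) - ((cn κ).im : ℂ))) * Polynomial.X ^ κ +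
      ∑ l : Fin κ, (Polynomial.C (q.2 l - cn (κ + (l : ℕ) + 1))
          * Polynomial.X ^ (κ + ((l : ℕ) + 1))
        - Polynomial.C ((starRingEnd ℂ) (q.2 l) - (starRingEnd ℂ) (cn (κ + (l : ℕ) + 1)))
          * Polynomial.X ^ (κ - ((l : ℕ) + 1)))) n = 0 := by
    intro n; rw [hQ0, Polynomial.coeff_zero]
  have hq1 : q.1 = (cn κ).im := by
    have h := hcoeff κ
    rw [Polynomial.coeff_add, Polynomial.finset_sum_coeff] at h
    rw [Finset.sum_eq_zero (fun l _ => by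
      rw [Polynomial.coeff_sub, Polynomial.coeff_C_mul, Polynomial.coeff_C_mul,
        Polynomial.coeff_X_pow, Polynomial.coeff_X_pow,
        if_neg (by omega), if_neg (by have := l.isLt; omega)]
      ring)] at h
    rw [add_zero, Polynomial.coeff_C_mul, Polynomial.coeff_X_pow, if_pos rfl, mul_one] at h
    rcases mul_eq_zero.mp h with h' | h'
    · exact absurd h' Complex.I_ne_zero
    · have := sub_eq_zero.mp h'
      exact_mod_cast this
  have hq2 : ∀ l₀ : Fin κ, q.2 l₀ = cn (κ + (l₀ : ℕ) + 1) := by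
    intro l₀
    have h := hcoeff (κ + ((l₀ : ℕ) + 1))
    rw [Polynomial.coeff_add, Polynomial.finset_sum_coeff,
      Polynomial.coeff_C_mul, Polynomial.coeff_X_pow, if_neg (by omega), mul_zero, zero_add] at h
    rw [Finset.sum_eq_single_of_mem l₀ (Finset.mem_univ _) (fun l _ hne => by
      rw [Polynomial.coeff_sub, Polynomial.coeff_C_mul, Polynomial.coeff_C_mul,
        Polynomial.coeff_X_pow, Polynomial.coeff_X_pow,
        if_neg (fun hc => hne (Fin.ext (by omega))), if_neg (by have := l.isLt; omega)]
      ring)] at h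
    rw [Polynomial.coeff_sub, Polynomial.coeff_C_mul, Polynomial.coeff_C_mul,
      Polynomial.coeff_X_pow, Polynomial.coeff_X_pow, if_pos rfl,
      if_neg (by have := l₀.isLt; omega), mul_one, mul_zero, sub_zero] at h
    exact sub_eq_zero.mp h
  obtain ⟨q1, q2⟩ := q
  simp only [Prod.mk.injEq]
  exact ⟨hq1, funext hq2⟩
end

section
/- If κ < 0 is a negative integer and w is holomorphic on the unit disk 𝔻, continuous on the closed disk, and satisfies Re(conj(ζ)^{−κ} · w(ζ)) = 0 for all ζ ∈ ∂𝔻 (equivalently, Re(ζ^{−κ} w(ζ)) = 0 on |ζ| = 1), then w ≡ 0. -/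
open Metric Complex Set Filter Topology

/-- the homogeneous Riemann–Hilbert problem with negative index κ < 0,
Re(ζ^{−κ} w(ζ)) = 0 on |ζ| = 1, has only the trivial continuous solution. -/
theorem stmt8 (κ : ℤ) (hκ : κ < 0) (w : ℂ → ℂ)
    (hol : DifferentiableOn ℂ w (Metric.ball 0 1))
    (cont : ContinuousOn w (Metric.closedBall 0 1))
    (hb : ∀ ζ : ℂ, ‖ζ‖ = 1 → (ζ ^ (-κ) * w ζ).re = 0) :
    ∀ z ∈ Metric.closedBall (0 : ℂ) 1, w z = 0 := by
  set n : ℕ := (-κ).toNat with hn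
  have hn1 : 1 ≤ n := by omega
  have hzn : ∀ ζ : ℂ, ζ ^ (-κ) = ζ ^ n := by
    intro ζ; rw [hn, ← zpow_natCast, Int.toNat_of_nonneg (by omega)]
  set f : ℂ → ℂ := fun z => z ^ n * w z with hf
  -- f is DiffContOnCl
  have hfd : DiffContOnCl ℂ f (ball 0 1) := by
    refine ⟨(differentiableOn_pow n).mul hol, ?_⟩
    rw [closure_ball (0 : ℂ) one_ne_zero]
    exact ((continuousOn_pow n)).mul cont
  -- boundary: Re f = 0 on sphere
  have hbf : ∀ ζ ∈ frontier (ball (0:ℂ) 1), (f ζ).re = 0 := by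
    intro ζ hζ
    rw [frontier_ball (0:ℂ) one_ne_zero, mem_sphere_zero_iff_norm] at hζ
    have := hb ζ hζ
    rwa [hzn] at this
  -- Re f = 0 on closed ball via max modulus applied to exp(±f)
  have hre : ∀ z ∈ closedBall (0:ℂ) 1, (f z).re = 0 := by
    intro z hz
    have hz' : z ∈ closure (ball (0:ℂ) 1) := by
      rwa [closure_ball (0:ℂ) one_ne_zero]
    have h1 : ‖Complex.exp (f z)‖ ≤ 1 := by
      refine Complex.norm_le_of_forall_mem_frontier_norm_le isBounded_ball
        (Complex.differentiable_exp.comp_diffContOnCl hfd) (fun ζ hζ => ?_) hz'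
      simp only [Function.comp_apply, Complex.norm_exp, hbf ζ hζ, Real.exp_zero]
      exact le_refl 1
    have h2 : ‖Complex.exp (-f z)‖ ≤ 1 := by
      refine Complex.norm_le_of_forall_mem_frontier_norm_le isBounded_ball
        (Complex.differentiable_exp.comp_diffContOnCl hfd.neg) (fun ζ hζ => ?_) hz'
      simp only [Function.comp_apply, Pi.neg_apply, Complex.norm_exp,
        Complex.neg_re, hbf ζ hζ, neg_zero, Real.exp_zero]
      exact le_refl 1
    rw [Complex.norm_exp] at h1 h2
    rw [Complex.neg_re] at h2
    have e1 : (f z).re ≤ 0 := Real.exp_le_one_iff.mp h1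
    have e2 : -(f z).re ≤ 0 := Real.exp_le_one_iff.mp h2
    linarith
  -- f is constant on the ball (open mapping theorem)
  have han : AnalyticOnNhd ℂ f (ball (0:ℂ) 1) :=
    hfd.differentiableOn.analyticOnNhd isOpen_ball
  have hconst : ∀ z ∈ ball (0:ℂ) 1, f z = f 0 := by
    rcases han.is_constant_or_isOpen (convex_ball _ _).isPreconnected with ⟨c, hc⟩ | hopen
    · intro z hz
      rw [hc z hz, hc 0 (by simp)]
    · exfalso
      have ho : IsOpen (f '' ball (0:ℂ) 1) :=
        hopen _ (subset_refl _) isOpen_ball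
      have h0 : f 0 ∈ f '' ball (0:ℂ) 1 := ⟨0, by simp, rfl⟩
      obtain ⟨ε, hε, hball⟩ := Metric.isOpen_iff.1 ho _ h0
      have hmem : f 0 + (ε/2 : ℝ) ∈ f '' ball (0:ℂ) 1 := by
        apply hball
        rw [mem_ball, Complex.dist_eq, add_sub_cancel_left, Complex.norm_real, Real.norm_eq_abs,
          abs_of_pos (half_pos hε)]
        linarith
      obtain ⟨y, hy, hyy⟩ := hmem
      have hy2 := hre y (ball_subset_closedBall hy)
      rw [hyy] at hy2
      have h0' := hre 0 (by simp)
      have : (f 0).re + ε/2 = 0 := by simpa using hy2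
      rw [h0'] at this
      linarith
  have hf0 : f 0 = 0 := by
    simp [hf, zero_pow (by omega : n ≠ 0)]
  -- w = 0 on ball \ {0}
  have hw0 : ∀ z ∈ ball (0:ℂ) 1 \ {0}, w z = 0 := by
    rintro z ⟨hz, hz0⟩
    have := hconst z hz
    rw [hf0, hf] at this
    simp only at this
    have hzn0 : z ^ n ≠ 0 := pow_ne_zero _ (by simpa using hz0)
    exact (mul_eq_zero.1 this).resolve_left hzn0
  -- extend to closed ball by continuity
  intro z hz
  set s : Set ℂ := ball (0:ℂ) 1 \ {0} with hs
  have hcls : z ∈ closure s := by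
    have hb0 : ball (0:ℂ) 1 ⊆ closure s := by
      intro x hx
      by_cases hx0 : x = (0:ℂ)
      · subst hx0
        rw [Metric.mem_closure_iff]
        intro ε hε
        have hδpos : (0:ℝ) < min ε 1 / 2 := by positivity
        refine ⟨((min ε 1)/2 : ℝ), ⟨?_, ?_⟩, ?_⟩
        · rw [mem_ball_zero_iff, Complex.norm_real, Real.norm_eq_abs, abs_of_pos hδpos]
          have : min ε 1 ≤ 1 := min_le_right _ _
          linarith
        · simp only [mem_singleton_iff]
          intro h
          rw [Complex.ofReal_eq_zero] at h
          linarith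
        · rw [Complex.dist_eq, zero_sub, norm_neg, Complex.norm_real, Real.norm_eq_abs,
            abs_of_pos hδpos]
          have : min ε 1 ≤ ε := min_le_left _ _
          linarith
      · exact subset_closure ⟨hx, hx0⟩
    have h1 : z ∈ closure (ball (0:ℂ) 1) := by
      rwa [closure_ball (0:ℂ) one_ne_zero]
    have h2 : closure (ball (0:ℂ) 1) ⊆ closure s := by
      rw [← closure_closure (s := s)]
      exact closure_mono hb0
    exact h2 h1
  have hne : (𝓝[s] z).NeBot := mem_closure_iff_nhdsWithin_neBot.1 hcls
  have hsub : s ⊆ closedBall (0:ℂ) 1 := fun x hx => ball_subset_closedBall hx.1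
  have h1 : Tendsto w (𝓝[s] z) (𝓝 (w z)) := ((cont z hz).mono hsub)
  have h2 : Tendsto w (𝓝[s] z) (𝓝 0) := by
    refine Tendsto.congr' ?_ tendsto_const_nhds
    exact (eventually_nhdsWithin_of_forall fun x hx => (hw0 x hx).symm)
  exact tendsto_nhds_unique h1 h2
end

section
/- For f : ∂𝔻 → ℝ continuous, the Schwarz operator S(f)(z) = (1/2πi) ∫_{∂𝔻} f(ζ) · (ζ+z)/(ζ−z) · dζ/ζ defines a holomorphic function on the open unit disk 𝔻 whose real part has boundary values f: for each continuity point ζ₀ ∈ ∂𝔻, Re(S(f)(z)) → f(ζ₀) as z → ζ₀ in 𝔻. Moreover Im(S(f)(0)) = 0. -/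
/-- The Schwarz operator on the unit disk, written via the parametrization
ζ = e^{it} of the positively oriented unit circle:
S(f)(z) = (1/2πi) ∫_{∂𝔻} f(ζ) (ζ+z)/(ζ−z) dζ/ζ
        = (1/2π) ∫₀^{2π} f(e^{it}) (e^{it}+z)/(e^{it}−z) dt. -/
noncomputable def schwarz (f : ℂ → ℝ) (z : ℂ) : ℂ :=
  (1 / (2 * Real.pi) : ℝ) * ∫ t in (0 : ℝ)..(2 * Real.pi),
    (f (Complex.exp (Complex.I * t)) : ℂ) *
      (Complex.exp (Complex.I * t) + z) / (Complex.exp (Complex.I * t) - z)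


section SchwarzAux
open Complex Metric intervalIntegral Real

noncomputable def ee (t : ℝ) : ℂ := Complex.exp (Complex.I * t)
lemma norm_ee (t : ℝ) : ‖ee t‖ = 1 := by
  unfold ee
  simp [Complex.norm_exp]
lemma ee_mem (t : ℝ) : ee t ∈ Metric.sphere (0:ℂ) 1 := by
  rw [mem_sphere_zero_iff_norm]; exact norm_ee t
lemma ee_ne_zero (t : ℝ) : ee t ≠ 0 := Complex.exp_ne_zero _
lemma ee_sub_ne {z : ℂ} (hz : ‖z‖ < 1) (t : ℝ) : ee t - z ≠ 0 := by
  intro h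
  rw [sub_eq_zero] at h
  rw [← h, norm_ee] at hz
  exact lt_irrefl _ hz
lemma circleMap_eq (t : ℝ) : circleMap 0 1 t = ee t := by
  simp [circleMap, ee, mul_comm]
lemma cont_ee : Continuous ee :=
  Complex.continuous_exp.comp (continuous_const.mul Complex.continuous_ofReal)
lemma cont_g {f : ℂ → ℝ} (hf : ContinuousOn f (Metric.sphere 0 1)) :
    Continuous fun t => f (ee t) :=
  hf.comp_continuous cont_ee ee_mem

noncomputable def poisson (z : ℂ) (t : ℝ) : ℝ :=
  (1 - Complex.normSq z) / Complex.normSq (ee t - z)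

lemma normSq_lt_one {z : ℂ} (hz : ‖z‖ < 1) : Complex.normSq z < 1 := by
  have h := Complex.sq_norm z
  nlinarith [norm_nonneg z]

lemma poisson_nonneg {z : ℂ} (hz : ‖z‖ < 1) (t : ℝ) : 0 ≤ poisson z t :=
  div_nonneg (by linarith [normSq_lt_one hz]) (Complex.normSq_nonneg _)

lemma cont_poisson {z : ℂ} (hz : ‖z‖ < 1) : Continuous (poisson z) := by
  apply Continuous.div continuous_const
    (Complex.continuous_normSq.comp (cont_ee.sub continuous_const))
  intro t
  exact fun h => ee_sub_ne hz t (Complex.normSq_eq_zero.mp h)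

lemma re_kernel {z : ℂ} (hz : ‖z‖ < 1) (t : ℝ) :
    ((ee t + z) / (ee t - z)).re = poisson z t := by
  have h1 : Complex.normSq (ee t) = 1 := by
    rw [← Complex.sq_norm, norm_ee]; norm_num
  rw [Complex.div_re, poisson]
  rw [← add_div]
  congr 1
  simp only [Complex.normSq_apply, Complex.add_re, Complex.add_im, Complex.sub_re,
    Complex.sub_im] at h1 ⊢
  linear_combination h1

lemma integrable_eediv {z : ℂ} (hz : ‖z‖ < 1) :
    IntervalIntegrable (fun t => ee t / (ee t - z)) MeasureTheory.volume 0 (2*π) :=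
  (Continuous.div cont_ee (cont_ee.sub continuous_const)
    (fun t => ee_sub_ne hz t)).intervalIntegrable _ _

lemma integral_ee_div {z : ℂ} (hz : ‖z‖ < 1) :
    ∫ t in (0:ℝ)..(2*π), ee t / (ee t - z) = 2*π := by
  have hmem : z ∈ Metric.ball (0:ℂ) 1 := by rwa [mem_ball_zero_iff]
  have h := circleIntegral.integral_sub_inv_of_mem_ball hmem
  rw [circleIntegral] at h
  simp only [deriv_circleMap, circleMap_eq, smul_eq_mul, one_mul] at h
  have h2 : ∫ t in (0:ℝ)..(2*π), Complex.I * (ee t / (ee t - z)) = 2*π*Complex.I := by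
    rw [← h]
    apply intervalIntegral.integral_congr
    intro t _
    have := ee_sub_ne hz t
    field_simp
  rw [intervalIntegral.integral_const_mul] at h2
  exact mul_left_cancel₀ Complex.I_ne_zero (h2.trans (by ring))

lemma integral_kernel {z : ℂ} (hz : ‖z‖ < 1) :
    ∫ t in (0:ℝ)..(2*π), (ee t + z) / (ee t - z) = 2*π := by
  have h1 : ∀ t:ℝ, (ee t + z)/(ee t - z) = 2 * (ee t / (ee t - z)) - 1 := by
    intro t
    have := ee_sub_ne hz t
    field_simp
    ring
  rw [intervalIntegral.integral_congr (fun t _ => h1 t),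
    intervalIntegral.integral_sub ((integrable_eediv hz).const_mul 2) intervalIntegrable_const,
    intervalIntegral.integral_const_mul, integral_ee_div hz, intervalIntegral.integral_const]
  simp [Complex.real_smul]
  push_cast
  ring

lemma schwarz_def (f : ℂ → ℝ) (z : ℂ) :
    schwarz f z = (1 / (2 * Real.pi) : ℝ) *
      ∫ t in (0 : ℝ)..(2 * Real.pi), (f (ee t) : ℂ) * (ee t + z) / (ee t - z) := rfl

lemma integrable_kernel {z : ℂ} (hz : ‖z‖ < 1) :
    IntervalIntegrable (fun t => (ee t + z) / (ee t - z)) MeasureTheory.volume 0 (2*π) :=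
  (Continuous.div (cont_ee.add continuous_const) (cont_ee.sub continuous_const)
    (fun t => ee_sub_ne hz t)).intervalIntegrable _ _

lemma integrable_integrand {f : ℂ → ℝ} (hf : ContinuousOn f (Metric.sphere 0 1)) {z : ℂ}
    (hz : ‖z‖ < 1) :
    IntervalIntegrable (fun t => (f (ee t) : ℂ) * (ee t + z) / (ee t - z))
      MeasureTheory.volume 0 (2*π) := by
  apply Continuous.intervalIntegrable
  exact Continuous.div ((Complex.continuous_ofReal.comp (cont_g hf)).mul (cont_ee.add continuous_const))
    (cont_ee.sub continuous_const) (fun t => ee_sub_ne hz t)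

lemma integral_poisson {z : ℂ} (hz : ‖z‖ < 1) :
    ∫ t in (0:ℝ)..(2*π), poisson z t = 2*π := by
  have h := Complex.reCLM.intervalIntegral_comp_comm (integrable_kernel hz)
  simp only [Complex.reCLM_apply] at h
  calc ∫ t in (0:ℝ)..(2*π), poisson z t
      = ∫ t in (0:ℝ)..(2*π), ((ee t + z) / (ee t - z)).re :=
        intervalIntegral.integral_congr (fun t _ => (re_kernel hz t).symm)
    _ = (∫ t in (0:ℝ)..(2*π), (ee t + z) / (ee t - z)).re := h
    _ = 2*π := by rw [integral_kernel hz]; simp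

lemma schwarz_re {f : ℂ → ℝ} (hf : ContinuousOn f (Metric.sphere 0 1)) {z : ℂ}
    (hz : ‖z‖ < 1) :
    (schwarz f z).re = (1/(2*π)) * ∫ t in (0:ℝ)..(2*π), f (ee t) * poisson z t := by
  rw [schwarz_def, Complex.re_ofReal_mul]
  congr 1
  have h := Complex.reCLM.intervalIntegral_comp_comm (integrable_integrand hf hz)
  simp only [Complex.reCLM_apply] at h
  rw [← h]
  apply intervalIntegral.integral_congr
  intro t _
  show (↑(f (ee t)) * (ee t + z) / (ee t - z)).re = f (ee t) * poisson z t
  rw [mul_div_assoc, Complex.re_ofReal_mul, re_kernel hz]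

lemma schwarz_differentiable {f : ℂ → ℝ} (hf : ContinuousOn f (Metric.sphere 0 1)) :
    DifferentiableOn ℂ (schwarz f) (Metric.ball 0 1) := by
  have hci : CircleIntegrable (fun ζ => (f ζ : ℂ)) 0 1 :=
    (Complex.continuous_ofReal.comp_continuousOn hf).circleIntegrable zero_le_one
  set G : ℂ → ℂ := fun w =>
    (2 * π * Complex.I : ℂ)⁻¹ • ∮ ζ in C(0, 1), (ζ - w)⁻¹ • (f ζ : ℂ) with hG
  have hGdiff : DifferentiableOn ℂ G (Metric.ball 0 1) := by
    have hp := hasFPowerSeriesOn_cauchy_integral (f := fun ζ => (f ζ : ℂ)) (c := 0)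
      (R := 1) (by simpa using hci) one_pos
    have h2 := hp.differentiableOn
    rw [Metric.emetric_ball_nnreal] at h2
    simp only [NNReal.coe_one] at h2
    exact h2
  set B : ℂ := ∮ ζ in C(0, 1), ζ⁻¹ • (f ζ : ℂ) with hB
  apply DifferentiableOn.congr
    (f := fun z => 2 * G z - (2 * π * Complex.I : ℂ)⁻¹ * B)
  · exact (hGdiff.const_mul 2).sub_const _
  · intro z hzm
    have hz : ‖z‖ < 1 := mem_ball_zero_iff.mp hzm
    have hint1 : IntervalIntegrable
        (fun t => (ee t * Complex.I) * ((ee t - z)⁻¹ * (f (ee t) : ℂ)))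
        MeasureTheory.volume 0 (2*π) := by
      apply Continuous.intervalIntegrable
      exact (cont_ee.mul continuous_const).mul
        (((cont_ee.sub continuous_const).inv₀ (fun t => ee_sub_ne hz t)).mul
          (Complex.continuous_ofReal.comp (cont_g hf)))
    have hint2 : IntervalIntegrable
        (fun t => (ee t * Complex.I) * ((ee t)⁻¹ * (f (ee t) : ℂ)))
        MeasureTheory.volume 0 (2*π) := by
      apply Continuous.intervalIntegrable
      exact (cont_ee.mul continuous_const).mul
        ((cont_ee.inv₀ (fun t => ee_ne_zero t)).mul
          (Complex.continuous_ofReal.comp (cont_g hf)))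
    have hAeq : (∮ ζ in C(0, 1), (ζ - z)⁻¹ • (f ζ : ℂ))
        = ∫ t in (0:ℝ)..(2*π), (ee t * Complex.I) * ((ee t - z)⁻¹ * (f (ee t) : ℂ)) := by
      rw [circleIntegral]
      simp only [deriv_circleMap, circleMap_eq, smul_eq_mul, one_mul]
    have hBeq : B = ∫ t in (0:ℝ)..(2*π), (ee t * Complex.I) * ((ee t)⁻¹ * (f (ee t) : ℂ)) := by
      rw [hB, circleIntegral]
      simp only [deriv_circleMap, circleMap_eq, smul_eq_mul, one_mul]
    have key : (∫ t in (0:ℝ)..(2*π), (f (ee t) : ℂ) * (ee t + z) / (ee t - z))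
        = Complex.I⁻¹ * (2 * (∮ ζ in C(0, 1), (ζ - z)⁻¹ • (f ζ : ℂ)) - B) := by
      rw [hAeq, hBeq, ← intervalIntegral.integral_const_mul,
        ← intervalIntegral.integral_sub (hint1.const_mul 2) hint2,
        ← intervalIntegral.integral_const_mul]
      apply intervalIntegral.integral_congr
      intro t _
      have h1 := ee_sub_ne hz t
      have h2 := ee_ne_zero t
      have hI := Complex.I_ne_zero
      field_simp
      ring
    rw [schwarz_def, key, hG]
    simp only [smul_eq_mul]
    have hπ : (π : ℂ) ≠ 0 := Complex.ofReal_ne_zero.mpr Real.pi_ne_zero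
    have hcoef : ((1 / (2 * π) : ℝ) : ℂ) * Complex.I⁻¹ = (2 * π * Complex.I : ℂ)⁻¹ := by
      push_cast
      field_simp
    rw [← mul_assoc, hcoef]
    ring

lemma schwarz_boundary {f : ℂ → ℝ} (hf : ContinuousOn f (Metric.sphere 0 1))
    {ζ₀ : ℂ} (hζ : ‖ζ₀‖ = 1) :
    Filter.Tendsto (fun z => (schwarz f z).re)
      (nhdsWithin ζ₀ (Metric.ball 0 1)) (nhds (f ζ₀)) := by
  obtain ⟨C, hC⟩ := (isCompact_sphere (0:ℂ) 1).exists_bound_of_continuousOn hf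
  have hζmem : ζ₀ ∈ Metric.sphere (0:ℂ) 1 := by rwa [mem_sphere_zero_iff_norm]
  have hC0 : 0 ≤ C := le_trans (norm_nonneg _) (hC ζ₀ hζmem)
  have h2π : (0:ℝ) < 2*π := by positivity
  rw [Metric.tendsto_nhdsWithin_nhds]
  intro ε hε
  have hcw := hf ζ₀ hζmem
  rw [Metric.continuousWithinAt_iff] at hcw
  obtain ⟨δ, hδ0, hδ⟩ := hcw (ε/4) (by positivity)
  refine ⟨min (δ/2) (ε * δ^2 / (64 * (C+1))), by positivity, ?_⟩
  intro z hzm hdist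
  have hz : ‖z‖ < 1 := mem_ball_zero_iff.mp hzm
  have hd1 : dist z ζ₀ < δ/2 := lt_of_lt_of_le hdist (min_le_left _ _)
  have hd2 : dist z ζ₀ < ε * δ^2 / (64*(C+1)) := lt_of_lt_of_le hdist (min_le_right _ _)
  have h1nz : 0 ≤ 1 - Complex.normSq z := by linarith [normSq_lt_one hz]
  have hnormSq : Complex.normSq z = ‖z‖^2 := by
    rw [← Complex.sq_norm]
  have hdge : 1 - ‖z‖ ≤ dist z ζ₀ := by
    have h := norm_sub_norm_le ζ₀ z
    rw [hζ] at h
    rw [dist_comm, dist_eq_norm]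
    exact h
  have hnz2 : 1 - Complex.normSq z ≤ 2 * dist z ζ₀ := by
    rw [hnormSq]
    nlinarith [norm_nonneg z, hz]
  set K : ℝ := 8*C*(1 - Complex.normSq z)/δ^2 with hK
  have hK0 : 0 ≤ K := by
    apply div_nonneg _ (by positivity)
    nlinarith
  -- pointwise bound
  have hptw : ∀ t ∈ Set.Icc (0:ℝ) (2*π),
      |(f (ee t) - f ζ₀) * poisson z t| ≤ (ε/4) * poisson z t + K := by
    intro t _
    rw [abs_mul, _root_.abs_of_nonneg (poisson_nonneg hz t)]
    by_cases hcase : dist (ee t) ζ₀ < δ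
    · have hnear := hδ (ee_mem t) hcase
      rw [Real.dist_eq] at hnear
      have h1 : |f (ee t) - f ζ₀| * poisson z t ≤ (ε/4) * poisson z t :=
        mul_le_mul_of_nonneg_right hnear.le (poisson_nonneg hz t)
      linarith
    · push_neg at hcase
      have hfar : δ/2 ≤ ‖ee t - z‖ := by
        have htri := dist_triangle (ee t) z ζ₀
        rw [dist_eq_norm, dist_eq_norm, dist_eq_norm] at htri
        have hz2 : ‖z - ζ₀‖ ≤ δ/2 := by rw [← dist_eq_norm]; exact hd1.le
        have hcase' : δ ≤ ‖ee t - ζ₀‖ := by rw [← dist_eq_norm]; exact hcase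
        linarith
      have hnormSqE : δ^2/4 ≤ Complex.normSq (ee t - z) := by
        rw [← Complex.sq_norm]
        nlinarith [hfar, hδ0]
      have hP : poisson z t ≤ (1 - Complex.normSq z)/(δ^2/4) := by
        apply div_le_div_of_nonneg_left h1nz (by nlinarith [mul_pos hδ0 hδ0]) hnormSqE
      have hbd : |f (ee t) - f ζ₀| ≤ 2*C := by
        have h1 := hC (ee t) (ee_mem t)
        have h2 := hC ζ₀ hζmem
        rw [Real.norm_eq_abs] at h1 h2
        calc |f (ee t) - f ζ₀| ≤ |f (ee t)| + |f ζ₀| := abs_sub _ _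
          _ ≤ 2*C := by linarith
      have hKεP : 0 ≤ (ε/4) * poisson z t := mul_nonneg (by positivity) (poisson_nonneg hz t)
      calc |f (ee t) - f ζ₀| * poisson z t
          ≤ (2*C) * ((1 - Complex.normSq z)/(δ^2/4)) :=
            mul_le_mul hbd hP (poisson_nonneg hz t) (by positivity)
        _ = K := by rw [hK]; field_simp; ring
        _ ≤ (ε/4) * poisson z t + K := by linarith
  -- integrability
  have hcontP := cont_poisson hz
  have hint1 : IntervalIntegrable (fun t => (f (ee t) - f ζ₀) * poisson z t)
      MeasureTheory.volume 0 (2*π) :=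
    (((cont_g hf).sub continuous_const).mul hcontP).intervalIntegrable _ _
  have hint2 : IntervalIntegrable (fun t => |(f (ee t) - f ζ₀) * poisson z t|)
      MeasureTheory.volume 0 (2*π) := hint1.abs
  have hint3 : IntervalIntegrable (fun t => (ε/4) * poisson z t + K)
      MeasureTheory.volume 0 (2*π) :=
    ((continuous_const.mul hcontP).add continuous_const).intervalIntegrable _ _
  -- integral bound
  have hIbound : |∫ t in (0:ℝ)..(2*π), (f (ee t) - f ζ₀) * poisson z t|
      ≤ (ε/4)*(2*π) + K*(2*π) := by
    calc |∫ t in (0:ℝ)..(2*π), (f (ee t) - f ζ₀) * poisson z t|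
        ≤ ∫ t in (0:ℝ)..(2*π), |(f (ee t) - f ζ₀) * poisson z t| :=
          intervalIntegral.abs_integral_le_integral_abs h2π.le
      _ ≤ ∫ t in (0:ℝ)..(2*π), ((ε/4) * poisson z t + K) :=
          intervalIntegral.integral_mono_on h2π.le hint2 hint3 hptw
      _ = (ε/4)*(2*π) + K*(2*π) := by
          rw [intervalIntegral.integral_add (f := fun t => ε/4 * poisson z t) ((continuous_const.mul hcontP).intervalIntegrable _ _)
            intervalIntegrable_const, intervalIntegral.integral_const_mul, integral_poisson hz,
            intervalIntegral.integral_const]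
          simp [smul_eq_mul]
          ring
  -- representation of difference
  have hintP : IntervalIntegrable (poisson z) MeasureTheory.volume 0 (2*π) :=
    hcontP.intervalIntegrable _ _
  have hintgP : IntervalIntegrable (fun t => f (ee t) * poisson z t)
      MeasureTheory.volume 0 (2*π) := ((cont_g hf).mul hcontP).intervalIntegrable _ _
  have hrepr : (schwarz f z).re - f ζ₀
      = (1/(2*π)) * ∫ t in (0:ℝ)..(2*π), (f (ee t) - f ζ₀) * poisson z t := by
    have hsplit : (∫ t in (0:ℝ)..(2*π), (f (ee t) - f ζ₀) * poisson z t)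
        = (∫ t in (0:ℝ)..(2*π), f (ee t) * poisson z t) - f ζ₀ * (2*π) := by
      have : ∀ t ∈ Set.uIcc (0:ℝ) (2*π), (f (ee t) - f ζ₀) * poisson z t
          = f (ee t) * poisson z t - f ζ₀ * poisson z t := fun t _ => by ring
      rw [intervalIntegral.integral_congr this,
        intervalIntegral.integral_sub hintgP (hintP.const_mul _),
        intervalIntegral.integral_const_mul, integral_poisson hz]
    rw [schwarz_re hf hz, hsplit]
    field_simp
  -- final estimate
  have hKlt : K < ε/4 := by
    have hd0 : (0:ℝ) ≤ dist z ζ₀ := dist_nonneg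
    have h16 : 16*(C+1) * dist z ζ₀ < 16*(C+1) * (ε * δ^2 / (64*(C+1))) :=
      mul_lt_mul_of_pos_left hd2 (by positivity)
    have heq2 : 16*(C+1) * (ε * δ^2 / (64*(C+1))) = ε * δ^2/4 := by field_simp; ring
    have ha : 8*C*(1 - Complex.normSq z) ≤ 8*C*(2*dist z ζ₀) :=
      mul_le_mul_of_nonneg_left hnz2 (by positivity)
    have hb : 8*C*(2*dist z ζ₀) ≤ 16*(C+1)*dist z ζ₀ := by nlinarith
    rw [hK, div_lt_iff₀ (by positivity)]
    nlinarith
  rw [Real.dist_eq, hrepr, abs_mul, abs_of_pos (by positivity : (0:ℝ) < 1/(2*π))]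
  have hfin : (1/(2*π)) * |∫ t in (0:ℝ)..(2*π), (f (ee t) - f ζ₀) * poisson z t|
      ≤ (1/(2*π)) * ((ε/4)*(2*π) + K*(2*π)) :=
    mul_le_mul_of_nonneg_left hIbound (by positivity)
  have heq : (1/(2*π)) * ((ε/4)*(2*π) + K*(2*π)) = ε/4 + K := by field_simp
  rw [heq] at hfin
  linarith

lemma schwarz_im_zero (f : ℂ → ℝ) : (schwarz f 0).im = 0 := by
  rw [schwarz_def]
  have h : ∀ t ∈ Set.uIcc (0:ℝ) (2*π),
      (f (ee t) : ℂ) * (ee t + 0) / (ee t - 0) = ((f (ee t) : ℝ) : ℂ) := by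
    intro t _
    rw [add_zero, sub_zero, mul_div_assoc, div_self (ee_ne_zero t), mul_one]
  rw [intervalIntegral.integral_congr h, intervalIntegral.integral_ofReal,
    ← Complex.ofReal_mul]
  exact Complex.ofReal_im _

end SchwarzAux

/-- for continuous f : ∂𝔻 → ℝ, S(f) is holomorphic on 𝔻, its real
part has boundary values f at every point of ∂𝔻, and Im(S(f)(0)) = 0. -/
theorem stmt12 (f : ℂ → ℝ) (hf : ContinuousOn f (Metric.sphere 0 1)) :
    DifferentiableOn ℂ (schwarz f) (Metric.ball 0 1) ∧
    (∀ ζ₀ : ℂ, ‖ζ₀‖ = 1 →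
      Filter.Tendsto (fun z => (schwarz f z).re)
        (nhdsWithin ζ₀ (Metric.ball 0 1)) (nhds (f ζ₀))) ∧
    (schwarz f 0).im = 0 :=
  ⟨schwarz_differentiable hf, fun _ hζ => schwarz_boundary hf hζ, schwarz_im_zero f⟩
end
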